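/- arXiv:1002.4799 — 8 statements merged into one kernel-verified Lean document; each statement's English description precedes it below -/
import Mathlib

section
/- Let g be a Lie algebra over a field k and let r : g → n_n(k) be a Lie algebra homomorphism, regarded as a representation of g on k^n. Then the associated filtration Fil^r equals the standard flag 0 ⊂ k^1 ⊂ k^2 ⊂ ⋯ ⊂ k^n (i.e. r is a flag representation) if and only if the functional λ_{i,i+1} : g → k is nonzero (equivalently, surjective) for every i = 1, …, n−1. -/
/-- The standard flag in `Fin n → k`: `stdFlag k n i` consists of the vectors supported in the
first `i` coordinates, i.e. it is `k^i ⊆ k^n`. -/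
def stdFlag (k : Type*) [Field k] (n i : ℕ) : Submodule k (Fin n → k) where
  carrier := {x | ∀ j : Fin n, i ≤ (j : ℕ) → x j = 0}
  add_mem' := by
    intro a b ha hb j hj
    simp [ha j hj, hb j hj]
  zero_mem' := fun j _ => rfl
  smul_mem' := by
    intro c a ha j hj
    simp [ha j hj]

attribute [local instance 100] LieRing.ofAssociativeRing

lemma mulVec_apply' {k : Type*} [Field k] {n : ℕ} (M : Matrix (Fin n) (Fin n) k)
    (x : Fin n → k) (j : Fin n) : Matrix.mulVec M x j = ∑ l, M j l * x l := rfl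

/-- Let `r : g → n_n(k)` be a Lie algebra homomorphism into the strictly upper
triangular matrices, regarded as a representation of `g` on `k^n` (acting by `mulVec`).  Then the
associated filtration `Fil` (defined by `Fil 0 = 0` and
`Fil (i+1) = {x : ∀ v, (r v) x ∈ Fil i}`) equals the standard flag
`0 ⊂ k^1 ⊂ ⋯ ⊂ k^n`, i.e. `r` is a flag representation, if and only if the matrix-entry
functional `λ_{i,i+1} : v ↦ (r v) i (i+1)` is nonzero for every `i = 1, …, n-1`. -/
theorem stmt_1 {k : Type*} [Field k] {g : Type*} [LieRing g] [LieAlgebra k g] {n : ℕ}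
    (r : g →ₗ⁅k⁆ Matrix (Fin n) (Fin n) k)
    (hr : ∀ (v : g) (i j : Fin n), j ≤ i → r v i j = 0)
    (Fil : ℕ → Submodule k (Fin n → k))
    (hFil0 : Fil 0 = ⊥)
    (hFilS : ∀ (i : ℕ) (x : Fin n → k),
      x ∈ Fil (i + 1) ↔ ∀ v : g, (r v).mulVec x ∈ Fil i) :
    (∀ i : ℕ, i ≤ n → Fil i = stdFlag k n i) ↔
      (∀ (i : ℕ) (hi : i + 1 < n), ∃ v : g, r v ⟨i, by omega⟩ ⟨i + 1, hi⟩ ≠ 0) := by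
  classical
  -- The standard flag is always contained in the filtration.
  have hstd : ∀ i : ℕ, stdFlag k n i ≤ Fil i := by
    intro i
    induction i with
    | zero =>
      rw [hFil0]
      intro x hx
      have hx0 : x = 0 := funext fun j => hx j (Nat.zero_le _)
      simp [hx0]
    | succ i ih =>
      intro x hx
      rw [hFilS]
      intro v
      apply ih
      intro j hj
      show Matrix.mulVec (r v) x j = 0
      rw [mulVec_apply']
      apply Finset.sum_eq_zero
      intro l _
      by_cases hl : (l : ℕ) ≤ (j : ℕ)
      · rw [hr v j l hl]
        ring
      · have hxl : x l = 0 := hx l (by omega)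
        simp [hxl]
  constructor
  · intro hF i hi
    by_contra hc
    push_neg at hc
    set j0 : Fin n := ⟨i, by omega⟩ with hj0def
    set j1 : Fin n := ⟨i + 1, hi⟩ with hj1def
    have he : Pi.single j1 (1 : k) ∈ Fil (i + 1) := by
      rw [hFilS]
      intro v
      apply hstd
      intro m hm
      show Matrix.mulVec (r v) (Pi.single j1 1) m = 0
      have hmv : Matrix.mulVec (r v) (Pi.single j1 1) m = r v m j1 * 1 := by
        rw [Matrix.mulVec_single]
        rfl
      rw [hmv, mul_one]
      rcases Nat.lt_or_ge (m : ℕ) (i + 1) with h | h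
      · have hmi : (m : ℕ) = i := by omega
        have hm' : m = j0 := Fin.ext hmi
        rw [hm']
        exact hc v
      · exact hr v m j1 h
    rw [hF (i + 1) (by omega)] at he
    have := he j1 (by simp [hj1def])
    simp at this
  · intro hl
    have hFle : ∀ i : ℕ, i ≤ n → Fil i ≤ stdFlag k n i := by
      intro i
      induction i with
      | zero => intro _; rw [hFil0]; exact bot_le
      | succ i ih =>
        intro hin x hx j hj
        by_contra hxj
        set S : Finset (Fin n) := Finset.univ.filter (fun l : Fin n => x l ≠ 0) with hSdef
        have hjS : j ∈ S := by simp [hSdef, hxj]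
        have hne : S.Nonempty := ⟨j, hjS⟩
        set j0 := S.max' hne with hj0def
        have hj0S : j0 ∈ S := S.max'_mem hne
        have hxj0 : x j0 ≠ 0 := by
          rw [hSdef] at hj0S
          simpa using hj0S
        have hj0ge : j ≤ j0 := S.le_max' j hjS
        have hj0i : i + 1 ≤ (j0 : ℕ) := le_trans hj hj0ge
        have h1 : (j0 : ℕ) - 1 + 1 < n := by
          have := j0.isLt; omega
        obtain ⟨v, hv⟩ := hl ((j0 : ℕ) - 1) h1
        set j1 : Fin n := ⟨(j0 : ℕ) - 1, by omega⟩ with hj1def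
        have hj0e : (⟨(j0 : ℕ) - 1 + 1, h1⟩ : Fin n) = j0 := Fin.ext (by simp; omega)
        rw [hj0e] at hv
        have hmem : Matrix.mulVec (r v) x ∈ stdFlag k n i :=
          ih (by omega) ((hFilS i x).mp hx v)
        have h0 : Matrix.mulVec (r v) x j1 = 0 := hmem j1 (by simp [hj1def]; omega)
        have hsum : Matrix.mulVec (r v) x j1 = r v j1 j0 * x j0 := by
          rw [mulVec_apply']
          rw [Finset.sum_eq_single j0]
          · intro l _ hlj0
            by_cases hll : (l : ℕ) ≤ (j1 : ℕ)
            · rw [hr v j1 l hll]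
              ring
            · have hlne : (l : ℕ) ≠ (j0 : ℕ) := fun h => hlj0 (Fin.ext h)
              have hlgt : (j0 : ℕ) < (l : ℕ) := by
                simp [hj1def] at hll; omega
              have hxl : x l = 0 := by
                by_contra hxl
                have hlS : l ∈ S := by simp [hSdef, hxl]
                have hle : (l : ℕ) ≤ (j0 : ℕ) := S.le_max' l hlS
                omega
              simp [hxl]
          · intro h
            exact absurd (Finset.mem_univ j0) h
        rw [hsum] at h0
        exact hv ((mul_eq_zero.mp h0).resolve_right hxj0)
    intro i hi
    exact le_antisymm (hFle i hi) (hstd i)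
end

section
/- Let r : g → End(E) be a flag representation of a Lie algebra g over a field k on an n-dimensional vector space E, with associated filtration 0 = E_0 ⊂ E_1 ⊂ ⋯ ⊂ E_n = E. Then every subrepresentation of E, i.e. every k-subspace E' ⊆ E with r(v)(E') ⊆ E' for all v ∈ g, is equal to E_j for some 0 ≤ j ≤ n. Moreover each such subrepresentation r restricted to E_j is itself a flag representation, with associated filtration E_0 ⊂ E_1 ⊂ ⋯ ⊂ E_j. -/
attribute [local instance] LieRing.ofAssociativeRing

/-- Let `r : g → End(E)` be a flag representation of a Lie algebra `g` over a
field `k` on an `n`-dimensional vector space `E`, with associated filtration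
`0 = Fil 0 ⊂ Fil 1 ⊂ ⋯ ⊂ Fil n = E` (a full flag).  Then (1) every subrepresentation
`E' ⊆ E` equals `Fil j` for some `j ≤ n`, and (2) for every `j ≤ n` the restriction of `r`
to `Fil j` is itself a flag representation whose associated filtration (here `Fil'`, expressed
via submodules of `E`: `Fil' 0 = 0`,
`Fil' (i+1) = {x ∈ Fil j : ∀ v, r v x ∈ Fil' i}`) is `Fil 0 ⊂ Fil 1 ⊂ ⋯ ⊂ Fil j`. -/
theorem stmt_3 {k : Type*} [Field k] {g : Type*} [LieRing g] [LieAlgebra k g]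
    {E : Type*} [AddCommGroup E] [Module k E] [FiniteDimensional k E] {n : ℕ}
    (r : g →ₗ⁅k⁆ Module.End k E)
    (Fil : ℕ → Submodule k E)
    (hFil0 : Fil 0 = ⊥)
    (hFilS : ∀ (i : ℕ) (x : E), x ∈ Fil (i + 1) ↔ ∀ v : g, r v x ∈ Fil i)
    (hdim : Module.finrank k E = n)
    (hflag : ∀ i : ℕ, i ≤ n → Module.finrank k (Fil i) = i) :
    (∀ E' : Submodule k E, (∀ v : g, ∀ x ∈ E', r v x ∈ E') →
      ∃ j : ℕ, j ≤ n ∧ E' = Fil j) ∧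
    (∀ j : ℕ, j ≤ n → ∀ Fil' : ℕ → Submodule k E,
      Fil' 0 = ⊥ →
      (∀ (i : ℕ) (x : E), x ∈ Fil' (i + 1) ↔ x ∈ Fil j ∧ ∀ v : g, r v x ∈ Fil' i) →
      ∀ i : ℕ, i ≤ j → Fil' i = Fil i) := by
  classical
  have mono : ∀ i, Fil i ≤ Fil (i + 1) := by
    intro i
    induction i with
    | zero => rw [hFil0]; exact bot_le
    | succ i ih =>
      intro x hx
      rw [hFilS] at hx ⊢
      exact fun v => ih (hx v)
  have mono' : Monotone Fil := monotone_nat_of_le_succ mono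
  have htop : Fil n = ⊤ :=
    Submodule.eq_top_of_finrank_eq (by rw [hflag n le_rfl, hdim])
  have claim : ∀ (E' : Submodule k E), (∀ v : g, ∀ x ∈ E', r v x ∈ E') →
      ∀ i, i < n → Fil i ≤ E' → E' ≠ Fil i → Fil (i + 1) ≤ E' := by
    intro E' hE' i hin hle hne
    obtain ⟨y, hyE, hyi⟩ : ∃ y ∈ E', y ∉ Fil i := by
      by_contra h
      push_neg at h
      exact hne (le_antisymm h hle)
    have key : ∀ m : ℕ, ∀ y : E, y ∈ E' → y ∈ Fil m → y ∉ Fil i →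
        ∃ x, x ∈ E' ∧ x ∈ Fil (i + 1) ∧ x ∉ Fil i := by
      intro m
      induction m with
      | zero =>
        intro y _ hy0 hyi
        rw [hFil0, Submodule.mem_bot] at hy0
        exact absurd (hy0 ▸ (Fil i).zero_mem) hyi
      | succ m ih =>
        intro y hyE hym hyi
        by_cases hall : ∀ v, r v y ∈ Fil i
        · exact ⟨y, hyE, (hFilS i y).mpr hall, hyi⟩
        · push_neg at hall
          obtain ⟨v, hv⟩ := hall
          exact ih (r v y) (hE' v y hyE) ((hFilS m y).mp hym v) hv
    have hyn : y ∈ Fil n := htop ▸ Submodule.mem_top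
    obtain ⟨x, hxE, hx1, hxi⟩ := key n y hyE hyn hyi
    have heq : Fil (i + 1) = Fil i ⊔ Submodule.span k {x} := by
      apply (Submodule.eq_of_le_of_finrank_le ?_ ?_).symm
      · exact sup_le (mono i) ((Submodule.span_singleton_le_iff_mem x _).mpr hx1)
      · rw [hflag (i + 1) hin]
        have hlt : Fil i < Fil i ⊔ Submodule.span k {x} :=
          lt_of_le_of_ne le_sup_left (by
            intro h
            exact hxi (h ▸ Submodule.mem_sup_right (Submodule.mem_span_singleton_self x)))
        have hd := Submodule.finrank_lt_finrank_of_lt hlt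
        rw [hflag i (le_of_lt hin)] at hd
        omega
    rw [heq]
    exact sup_le hle ((Submodule.span_singleton_le_iff_mem x _).mpr hxE)
  constructor
  · intro E' hE'
    set P : ℕ → Prop := fun i => Fil i ≤ E' with hP
    have hP0 : P 0 := by rw [hP]; simp [hFil0]
    set j := Nat.findGreatest P n with hj
    have hjn : j ≤ n := Nat.findGreatest_le n
    have hjle : Fil j ≤ E' := Nat.findGreatest_spec (Nat.zero_le n) hP0
    refine ⟨j, hjn, ?_⟩
    by_contra hne
    rcases lt_or_eq_of_le hjn with hjn' | hjn'
    · have := claim E' hE' j hjn' hjle hne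
      exact Nat.findGreatest_is_greatest (Nat.lt_succ_self j) hjn' this
    · apply hne
      apply le_antisymm _ hjle
      rw [hjn', htop]
      exact le_top
  · intro j hjn Fil' hFil'0 hFil'S i
    induction i with
    | zero => intro _; rw [hFil'0, hFil0]
    | succ i ih =>
      intro hij
      have hi : Fil' i = Fil i := ih (Nat.le_of_succ_le hij)
      ext x
      rw [hFil'S, hi, hFilS]
      constructor
      · exact fun h => h.2
      · exact fun h => ⟨mono' hij ((hFilS i x).mpr h), h⟩
end

section
/- Let g be a Lie algebra over a field k and let r : g → n_n(k) be a Lie algebra homomorphism. Let 1 ≤ i < j < m ≤ n, let u ∈ g^{(j−i)} and v ∈ g^{(m−j)}. Then λ_{i,m}([u,v]) = λ_{i,j}(u)·λ_{j,m}(v) − λ_{i,m−j+i}(v)·λ_{m−j+i,m}(u). -/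
attribute [local instance 100] LieRing.ofAssociativeRing

lemma stmt4_aux {k : Type*} [Field k] {g : Type*} [LieRing g] [LieAlgebra k g] {n : ℕ}
    (r : g →ₗ⁅k⁆ Matrix (Fin n) (Fin n) k)
    (hr : ∀ (v : g) (i j : Fin n), j ≤ i → r v i j = 0) :
    ∀ (t : ℕ) (w : g), w ∈ LieModule.lowerCentralSeries k g g t →
      ∀ a b : Fin n, (b : ℕ) < (a : ℕ) + t + 1 → r w a b = 0 := by
  intro t
  induction t with
  | zero =>
    intro w _ a b h
    exact hr w a b (by rw [Fin.le_def]; omega)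
  | succ t ih =>
    intro w hw a b hab
    rw [LieModule.lowerCentralSeries_succ] at hw
    have hw' : w ∈ Submodule.span k
        {x | ∃ y ∈ (⊤ : LieIdeal k g), ∃ z ∈ LieModule.lowerCentralSeries k g g t, ⁅y, z⁆ = x} := by
      rw [← LieSubmodule.lieIdeal_oper_eq_linear_span']
      exact hw
    clear hw
    induction hw' using Submodule.span_induction with
    | mem x hx =>
      obtain ⟨y, -, z, hz, rfl⟩ := hx
      rw [LieHom.map_lie, Ring.lie_def, Matrix.sub_apply, Matrix.mul_apply, Matrix.mul_apply]
      rw [Finset.sum_eq_zero, Finset.sum_eq_zero, sub_zero]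
      · intro l _
        by_cases h : (l : ℕ) < (b : ℕ)
        · rw [ih z hz a l (by omega), zero_mul]
        · rw [hr y l b (by rw [Fin.le_def]; omega), mul_zero]
      · intro l _
        by_cases h : (a : ℕ) < (l : ℕ)
        · rw [ih z hz l b (by omega), mul_zero]
        · rw [hr y a l (by rw [Fin.le_def]; omega), zero_mul]
    | zero => simp
    | add x y _ _ hx hy => rw [map_add, Matrix.add_apply, hx, hy, add_zero]
    | smul c x _ hx => rw [map_smul, Matrix.smul_apply, hx, smul_zero]

/-- Let `r : g → n_n(k)` be a Lie algebra homomorphism into the strictly upper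
triangular matrices.  Let `i < j < m` be indices, let `u ∈ g^{(j-i)}` and `v ∈ g^{(m-j)}`
(terms of the lower central series; note Mathlib's `lowerCentralSeries ⋯ 0 = g = g^{(1)}`, so
`g^{(s)}` is `lowerCentralSeries ⋯ (s-1)`).  Then
`λ_{i,m}([u,v]) = λ_{i,j}(u)·λ_{j,m}(v) − λ_{i,m-j+i}(v)·λ_{m-j+i,m}(u)`. -/
theorem stmt_4 {k : Type*} [Field k] {g : Type*} [LieRing g] [LieAlgebra k g] {n : ℕ}
    (r : g →ₗ⁅k⁆ Matrix (Fin n) (Fin n) k)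
    (hr : ∀ (v : g) (i j : Fin n), j ≤ i → r v i j = 0)
    (i j m : Fin n) (hij : (i : ℕ) < (j : ℕ)) (hjm : (j : ℕ) < (m : ℕ))
    (u v : g)
    (hu : u ∈ LieModule.lowerCentralSeries k g g ((j : ℕ) - (i : ℕ) - 1))
    (hv : v ∈ LieModule.lowerCentralSeries k g g ((m : ℕ) - (j : ℕ) - 1)) :
    r ⁅u, v⁆ i m =
      r u i j * r v j m -
        r v i ⟨(m : ℕ) - (j : ℕ) + (i : ℕ), by have := m.isLt; omega⟩ *
          r u ⟨(m : ℕ) - (j : ℕ) + (i : ℕ), by have := m.isLt; omega⟩ m := by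
  set p : Fin n := ⟨(m : ℕ) - (j : ℕ) + (i : ℕ), by have := m.isLt; omega⟩ with hp
  have hpv : (p : ℕ) = (m : ℕ) - (j : ℕ) + (i : ℕ) := rfl
  have hu' := stmt4_aux r hr _ u hu
  have hv' := stmt4_aux r hr _ v hv
  rw [LieHom.map_lie, Ring.lie_def, Matrix.sub_apply, Matrix.mul_apply, Matrix.mul_apply]
  rw [Finset.sum_eq_single j, Finset.sum_eq_single p]
  · intro l _ hl
    have hl' : (l : ℕ) ≠ (p : ℕ) := fun h => hl (Fin.ext h)
    by_cases h : (l : ℕ) < (p : ℕ)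
    · rw [hv' i l (by omega), zero_mul]
    · rw [hu' l m (by omega), mul_zero]
  · intro h; exact absurd (Finset.mem_univ p) h
  · intro l _ hl
    have hl' : (l : ℕ) ≠ (j : ℕ) := fun h => hl (Fin.ext h)
    by_cases h : (l : ℕ) < (j : ℕ)
    · rw [hu' i l (by omega), zero_mul]
    · rw [hv' l m (by omega), mul_zero]
  · intro h; exact absurd (Finset.mem_univ j) h
end

section
/- Let k be a field of characteristic 0 and let g be the Lie algebra whose underlying vector space is k^4 ⊕ k, with bracket [(v,a),(w,b)] = (0, v_1 w_2 − v_2 w_1 + v_3 w_4 − v_4 w_3). Then for every Lie algebra homomorphism r : g → n_3(k), the functionals λ_{1,2} and λ_{2,3} are linearly dependent (λ_{1,2} ∧ λ_{2,3} = 0). In particular g admits no wide 3-dimensional representation, i.e. no wide homomorphism g → n_3(k). -/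
attribute [local instance] LieRing.ofAssociativeRing

/-- Let `k` be a field of characteristic `0` and let `g` be the Lie algebra
with underlying vector space `k^4 ⊕ k` and bracket
`[(v,a),(w,b)] = (0, v₁w₂ − v₂w₁ + v₃w₄ − v₄w₃)` (presented here by a linear isomorphism
`e : g ≃ (Fin 4 → k) × k` transporting the bracket to this formula).  Then for every Lie
algebra homomorphism `r : g → n_3(k)` the functionals `λ_{1,2}` and `λ_{2,3}` are linearly
dependent; in particular `g` admits no wide homomorphism `g → n_3(k)`. -/
theorem stmt_10 {k : Type*} [Field k] [CharZero k]
    {g : Type*} [LieRing g] [LieAlgebra k g]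
    (e : g ≃ₗ[k] (Fin 4 → k) × k)
    (he : ∀ x y : g,
      e ⁅x, y⁆ =
        (0,
          (e x).1 0 * (e y).1 1 - (e x).1 1 * (e y).1 0 +
            (e x).1 2 * (e y).1 3 - (e x).1 3 * (e y).1 2))
    (r : g →ₗ⁅k⁆ Matrix (Fin 3) (Fin 3) k)
    (hr : ∀ (v : g) (i j : Fin 3), j ≤ i → r v i j = 0) :
    (∃ a b : k, (a ≠ 0 ∨ b ≠ 0) ∧ ∀ v : g, a * r v 0 1 + b * r v 1 2 = 0) ∧
    ¬ ((∀ (i : ℕ) (hi : i + 1 < 3), ∃ v : g, r v ⟨i, by omega⟩ ⟨i + 1, hi⟩ ≠ 0) ∧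
        ∀ a b : k, (∀ v : g, a * r v 0 1 + b * r v 1 2 = 0) → a = 0 ∧ b = 0) := by
  classical
  set z : g := e.symm (0, 1) with hz
  set c : k := r z 0 2 with hc0
  -- key identity
  have key : ∀ x y : g, r x 0 1 * r y 1 2 - r y 0 1 * r x 1 2 =
      ((e x).1 0 * (e y).1 1 - (e x).1 1 * (e y).1 0 +
        (e x).1 2 * (e y).1 3 - (e x).1 3 * (e y).1 2) * c := by
    intro x y
    set w : k := (e x).1 0 * (e y).1 1 - (e x).1 1 * (e y).1 0 +
        (e x).1 2 * (e y).1 3 - (e x).1 3 * (e y).1 2 with hw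
    have h1 : ⁅x, y⁆ = w • z := by
      apply e.injective
      rw [he, map_smul, hz, e.apply_symm_apply, Prod.smul_mk]
      simp [hw]
    have h2 : r ⁅x, y⁆ 0 2 = w * c := by
      rw [h1, map_smul, Matrix.smul_apply, smul_eq_mul, hc0]
    have h3 : r ⁅x, y⁆ 0 2 = r x 0 1 * r y 1 2 - r y 0 1 * r x 1 2 := by
      rw [LieHom.map_lie, Ring.lie_def, Matrix.sub_apply, Matrix.mul_apply, Matrix.mul_apply,
        Fin.sum_univ_three, Fin.sum_univ_three, hr x 0 0 (le_refl _), hr y 0 0 (le_refl _),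
        hr x 2 2 (le_refl _), hr y 2 2 (le_refl _)]
      ring
    rw [← h3, h2]
  -- evaluate on basis vectors
  set E : Fin 4 → g := fun i => e.symm (Pi.single i 1, 0) with hE
  have heE : ∀ i, e (E i) = (Pi.single i 1, 0) := fun i => e.apply_symm_apply _
  set a : Fin 4 → k := fun i => r (E i) 0 1 with ha
  set b : Fin 4 → k := fun i => r (E i) 1 2 with hb
  have keyE : ∀ i j : Fin 4, a i * b j - a j * b i =
      ((Pi.single i 1 : Fin 4 → k) 0 * (Pi.single j 1 : Fin 4 → k) 1 -
        (Pi.single i 1 : Fin 4 → k) 1 * (Pi.single j 1 : Fin 4 → k) 0 +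
        (Pi.single i 1 : Fin 4 → k) 2 * (Pi.single j 1 : Fin 4 → k) 3 -
        (Pi.single i 1 : Fin 4 → k) 3 * (Pi.single j 1 : Fin 4 → k) 2) * c := by
    intro i j
    have := key (E i) (E j)
    rwa [heE, heE] at this
  have eq01 : a 0 * b 1 - a 1 * b 0 = c := by
    have := keyE 0 1; simpa [Pi.single_apply] using this
  have eq23 : a 2 * b 3 - a 3 * b 2 = c := by
    have := keyE 2 3; simpa [Pi.single_apply] using this
  have eq02 : a 0 * b 2 - a 2 * b 0 = 0 := by
    have := keyE 0 2; simpa [Pi.single_apply] using this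
  have eq03 : a 0 * b 3 - a 3 * b 0 = 0 := by
    have := keyE 0 3; simpa [Pi.single_apply] using this
  have eq12 : a 1 * b 2 - a 2 * b 1 = 0 := by
    have := keyE 1 2; simpa [Pi.single_apply] using this
  have eq13 : a 1 * b 3 - a 3 * b 1 = 0 := by
    have := keyE 1 3; simpa [Pi.single_apply] using this
  have hcc : c * c = 0 := by
    calc c * c = (a 0 * b 1 - a 1 * b 0) * (a 2 * b 3 - a 3 * b 2) := by rw [eq01, eq23]
      _ = 0 := by
        linear_combination (a 1 * b 3 - a 3 * b 1) * eq02 - (a 1 * b 2 - a 2 * b 1) * eq03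
  have hc : c = 0 := by
    rcases mul_self_eq_zero.mp hcc with h; exact h
  have main : ∀ x y : g, r x 0 1 * r y 1 2 - r y 0 1 * r x 1 2 = 0 := by
    intro x y; rw [key x y, hc, mul_zero]
  have part1 : ∃ a b : k, (a ≠ 0 ∨ b ≠ 0) ∧ ∀ v : g, a * r v 0 1 + b * r v 1 2 = 0 := by
    by_cases h : ∀ v : g, r v 0 1 = 0
    · exact ⟨1, 0, Or.inl one_ne_zero, fun v => by rw [h v]; ring⟩
    · push_neg at h
      obtain ⟨x0, hx0⟩ := h
      refine ⟨r x0 1 2, -r x0 0 1, Or.inr (neg_ne_zero.mpr hx0), fun v => ?_⟩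
      linear_combination -(main x0 v)
  refine ⟨part1, fun h => ?_⟩
  obtain ⟨aa, bb, hab, hall⟩ := part1
  obtain ⟨ha0, hb0⟩ := h.2 aa bb hall
  rcases hab with h' | h' <;> [exact h' ha0; exact h' hb0]
end

section
/- Let g be a Lie algebra over a field k and let r, r' : g → n_2(k) be nonzero Lie algebra homomorphisms, with corresponding nonzero functionals λ = λ^r_{1,2} and λ' = λ^{r'}_{1,2} on g (both necessarily vanish on [g,g]). Then there exists b ∈ GL_2(k) with b·r(v)·b^{−1} = r'(v) for all v ∈ g if and only if λ' = c·λ for some c ∈ k^×. Consequently, GL_2(k)-conjugacy classes of nonzero homomorphisms g → n_2(k) are in bijection with lines in the dual space of g/[g,g]. (This is the field-point description of the isomorphism M^nd_2(g) ≅ P(g^ab).) -/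
attribute [local instance 100] LieRing.ofAssociativeRing

/-- Let `r, r' : g → n_2(k)` be nonzero Lie algebra homomorphisms into the
strictly upper triangular `2 × 2` matrices, with corresponding nonzero functionals
`λ = λ^r_{1,2}` and `λ' = λ^{r'}_{1,2}` (which necessarily vanish on `[g,g]`).  Then `r` and
`r'` are conjugate by some `b ∈ GL_2(k)` if and only if `λ' = c·λ` for some `c ∈ kˣ`.
Moreover (surjectivity onto lines in the dual of `g/[g,g]`): every nonzero functional `μ`
vanishing on brackets arises as `λ^s_{1,2}` for some such homomorphism `s`.  Together these
give the bijection between conjugacy classes of nonzero homomorphisms `g → n_2(k)` and lines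
in the dual space of `g/[g,g]`. -/
theorem stmt_12 {k : Type*} [Field k] {g : Type*} [LieRing g] [LieAlgebra k g]
    (r r' : g →ₗ⁅k⁆ Matrix (Fin 2) (Fin 2) k)
    (hr : ∀ (v : g) (i j : Fin 2), j ≤ i → r v i j = 0)
    (hr' : ∀ (v : g) (i j : Fin 2), j ≤ i → r' v i j = 0)
    (hr0 : ∃ v : g, r v 0 1 ≠ 0)
    (hr'0 : ∃ v : g, r' v 0 1 ≠ 0) :
    ((∃ b : Matrix (Fin 2) (Fin 2) k, IsUnit b ∧ ∀ v : g, b * r v = r' v * b) ↔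
      ∃ c : kˣ, ∀ v : g, r' v 0 1 = (c : k) * r v 0 1) ∧
    (∀ x y : g, r ⁅x, y⁆ 0 1 = 0) ∧
    (∀ μ : g →ₗ[k] k, μ ≠ 0 → (∀ x y : g, μ ⁅x, y⁆ = 0) →
      ∃ s : g →ₗ⁅k⁆ Matrix (Fin 2) (Fin 2) k,
        (∀ (v : g) (i j : Fin 2), j ≤ i → s v i j = 0) ∧ ∀ v : g, s v 0 1 = μ v) := by
  have h00 : ∀ v : g, r v 0 0 = 0 := fun v => hr v 0 0 le_rfl
  have h10 : ∀ v : g, r v 1 0 = 0 := fun v => hr v 1 0 (by norm_num)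
  have h11 : ∀ v : g, r v 1 1 = 0 := fun v => hr v 1 1 le_rfl
  have h00' : ∀ v : g, r' v 0 0 = 0 := fun v => hr' v 0 0 le_rfl
  have h10' : ∀ v : g, r' v 1 0 = 0 := fun v => hr' v 1 0 (by norm_num)
  have h11' : ∀ v : g, r' v 1 1 = 0 := fun v => hr' v 1 1 le_rfl
  refine ⟨⟨?_, ?_⟩, ?_, ?_⟩
  · rintro ⟨b, hb, hconj⟩
    obtain ⟨w, hw⟩ := hr0
    have hb10 : b 1 0 = 0 := by
      have := congrFun (congrFun (hconj w) 1) 1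
      simp [Matrix.mul_apply, Fin.sum_univ_two, h11, h10', h11'] at this
      rcases this with h | h
      · exact h
      · exact absurd h hw
    have hdet := hb.map (Matrix.detMonoidHom (n := Fin 2) (R := k))
    simp [Matrix.det_fin_two, hb10] at hdet
    obtain ⟨hb00, hb11⟩ := hdet
    refine ⟨Units.mk0 (b 0 0 * (b 1 1)⁻¹)
      (mul_ne_zero hb00 (inv_ne_zero hb11)), fun v => ?_⟩
    have key := congrFun (congrFun (hconj v) 0) 1
    simp [Matrix.mul_apply, Fin.sum_univ_two, h11, h00'] at key
    apply mul_right_cancel₀ hb11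
    rw [Units.val_mk0]
    field_simp
    linear_combination -key
  · rintro ⟨c, hc⟩
    refine ⟨!![(c : k), 0; 0, 1], ?_, fun v => ?_⟩
    · rw [Matrix.isUnit_iff_isUnit_det]
      simp [Matrix.det_fin_two]
    · ext i j
      fin_cases i <;> fin_cases j <;>
        simp [Matrix.mul_apply, Fin.sum_univ_two, h00, h10, h11, h00', h10', h11', hc v]
  · intro x y
    have h : r ⁅x, y⁆ = r x * r y - r y * r x := by
      rw [LieHom.map_lie, Ring.lie_def]
    rw [h]
    simp [Matrix.mul_apply, Fin.sum_univ_two, h00, h11]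
  · intro μ hμ hμbr
    set E : Matrix (Fin 2) (Fin 2) k := Matrix.single 0 1 1 with hE
    have hEE : E * E = 0 := by
      ext i j
      fin_cases i <;> fin_cases j <;>
        simp [hE, Matrix.single, Matrix.mul_apply, Fin.sum_univ_two]
    refine ⟨{ toLinearMap := μ.smulRight E, map_lie' := fun {x y} => ?_ }, ?_, ?_⟩
    · show μ ⁅x, y⁆ • E = (μ x • E) * (μ y • E) - (μ y • E) * (μ x • E)
      simp [hμbr x y, Matrix.smul_mul, Matrix.mul_smul, hEE]
    · intro v i j hij
      show (μ v • E) i j = 0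
      fin_cases i <;> fin_cases j <;>
        first
          | exact absurd hij (by decide)
          | simp [hE, Matrix.single]
    · intro v
      show (μ v • E) 0 1 = μ v
      simp [hE, Matrix.single]
end

section
/- Let B' be a Noetherian commutative ring, let B be a commutative B'-algebra, let N' be a finitely generated B'-module, and let n' ∈ N' be an element such that 1_B ⊗ n' = 0 in B ⊗_{B'} N'. Then there exists a B'-subalgebra B'' of B which is of finite type over B' and such that 1_{B''} ⊗ n' = 0 in B'' ⊗_{B'} N'. -/
open scoped TensorProduct

/-- Let `B'` be a Noetherian commutative ring, `B` a commutative
`B'`-algebra, `N'` a finitely generated `B'`-module and `x ∈ N'` with `1 ⊗ x = 0` in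
`B ⊗_{B'} N'`.  Then there is a finite-type `B'`-subalgebra `A ⊆ B` with `1 ⊗ x = 0` already
in `A ⊗_{B'} N'`. -/
theorem stmt_14 {B' : Type*} [CommRing B'] [IsNoetherianRing B']
    {B : Type*} [CommRing B] [Algebra B' B]
    {N' : Type*} [AddCommGroup N'] [Module B' N'] [Module.Finite B' N']
    (x : N') (h : (1 : B) ⊗ₜ[B'] x = (0 : B ⊗[B'] N')) :
    ∃ A : Subalgebra B' B, A.FG ∧ (1 : A) ⊗ₜ[B'] x = (0 : A ⊗[B'] N') := by
  classical
  -- free presentation of `N'`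
  obtain ⟨n, π, hπ⟩ := Module.Finite.exists_fin' B' N'
  obtain ⟨v, hv⟩ := hπ x
  -- exactness of `B ⊗ ker π → B ⊗ B'ⁿ → B ⊗ N'`
  have hexact : Function.Exact (LinearMap.lTensor B (LinearMap.ker π).subtype)
      (LinearMap.lTensor B π) :=
    lTensor_exact B π.exact_subtype_ker_map hπ
  have h0 : LinearMap.lTensor B π ((1 : B) ⊗ₜ[B'] v) = 0 := by
    simpa [hv] using h
  obtain ⟨y, hy⟩ := (hexact _).mp h0
  obtain ⟨S, hS⟩ := TensorProduct.exists_finset y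
  -- the finite-type subalgebra generated by the left components of `y`
  set A : Subalgebra B' B := Algebra.adjoin B' (S.image Prod.fst : Finset B)
  refine ⟨A, ⟨S.image Prod.fst, rfl⟩, ?_⟩
  -- build the corresponding element of `A ⊗ B'ⁿ`
  have hmem : ∀ i ∈ S, (i : B × ↥(LinearMap.ker π)).1 ∈ A := fun i hi =>
    Algebra.subset_adjoin (by exact Finset.mem_image_of_mem Prod.fst hi)
  set w : A ⊗[B'] (Fin n → B') :=
    ∑ i ∈ S.attach, (⟨i.1.1, hmem i.1 i.2⟩ : A) ⊗ₜ[B'] (i.1.2 : Fin n → B')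
  -- the inclusion `A →ₗ B`
  set ι : A →ₗ[B'] B := A.val.toLinearMap
  have hιinj : Function.Injective ι := Subtype.val_injective
  have hinj : Function.Injective (LinearMap.rTensor (Fin n → B') ι) :=
    Module.Flat.rTensor_preserves_injective_linearMap ι hιinj
  have key : (1 : A) ⊗ₜ[B'] v = w := by
    apply hinj
    have h1 : LinearMap.rTensor (Fin n → B') ι ((1 : A) ⊗ₜ[B'] v) = (1 : B) ⊗ₜ[B'] v := by
      simp [ι]
    have h2 : LinearMap.rTensor (Fin n → B') ι w
        = ∑ i ∈ S.attach, (i.1.1 : B) ⊗ₜ[B'] (i.1.2 : Fin n → B') := by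
      simp [w, ι]
    rw [h1, h2, ← hy, hS]
    rw [Finset.sum_attach S (fun i => (i.1 : B) ⊗ₜ[B'] (i.2 : Fin n → B'))]
    rw [map_sum]
    simp
  have := congrArg (LinearMap.lTensor A π) key
  simp only [LinearMap.lTensor_tmul, hv] at this
  rw [this]
  simp only [w, map_sum]
  apply Finset.sum_eq_zero
  intro i _
  have : π (i.1.2 : Fin n → B') = 0 := i.1.2.2
  simp [this]
end

section
/- Let B' be a Noetherian commutative ring, let B be a commutative B'-algebra, let Q' be a finitely presented B'-module and N' a finitely generated B'-module, and let σ : B ⊗_{B'} Q' → B ⊗_{B'} N' be a B-linear map. Then there exists a B'-subalgebra B'' ⊆ B of finite type over B' and a B''-linear map σ'' : B'' ⊗_{B'} Q' → B'' ⊗_{B'} N' such that σ is obtained from σ'' by base change along B'' → B, i.e. σ = id_B ⊗_{B''} σ''. -/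
open scoped TensorProduct

set_option maxHeartbeats 1000000
set_option synthInstance.maxHeartbeats 400000

/-- Let `B'` be a Noetherian commutative ring, `B` a commutative
`B'`-algebra, `Q'` a finitely presented `B'`-module, `N'` a finitely generated `B'`-module,
and `σ : B ⊗_{B'} Q' → B ⊗_{B'} N'` a `B`-linear map.  Then there is a finite-type
`B'`-subalgebra `A ⊆ B` and an `A`-linear map `σ'' : A ⊗_{B'} Q' → A ⊗_{B'} N'` from which
`σ` is obtained by base change, i.e. `σ` and `σ''` commute with the canonical maps
`A ⊗_{B'} Q' → B ⊗_{B'} Q'` and `A ⊗_{B'} N' → B ⊗_{B'} N'` (which determines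
`σ = id_B ⊗_A σ''` by `B`-linearity). -/
theorem stmt_15 {B' : Type*} [CommRing B'] [IsNoetherianRing B']
    {B : Type*} [CommRing B] [Algebra B' B]
    {Q' : Type*} [AddCommGroup Q'] [Module B' Q'] [Module.FinitePresentation B' Q']
    {N' : Type*} [AddCommGroup N'] [Module B' N'] [Module.Finite B' N']
    (σ : B ⊗[B'] Q' →ₗ[B] B ⊗[B'] N') :
    ∃ A : Subalgebra B' B, A.FG ∧
      ∃ σ'' : (A ⊗[B'] Q') →ₗ[A] (A ⊗[B'] N'),
        ∀ q : A ⊗[B'] Q',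
          σ (LinearMap.rTensor Q' A.val.toLinearMap q) =
            LinearMap.rTensor N' A.val.toLinearMap (σ'' q) := by
  classical
  -- presentations
  obtain ⟨n, p, hp⟩ := Module.Finite.exists_fin' B' Q'
  obtain ⟨k, pN, hpN⟩ := Module.Finite.exists_fin' B' N'
  obtain ⟨m, r, hr⟩ := Submodule.fg_iff_exists_fin_generating_family.mp
    (IsNoetherian.noetherian (LinearMap.ker p))
  set e : Module.Basis (Fin n) B' (Fin n → B') := Pi.basisFun B' (Fin n) with he
  set σ' : B ⊗[B'] Q' →ₗ[B'] B ⊗[B'] N' := σ.restrictScalars B' with hσ'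
  -- choose preimages of `σ (1 ⊗ p (e i))` in `B ⊗ (Fin k → B')`
  have hxs : ∀ i : Fin n, ∃ x : B ⊗[B'] (Fin k → B'),
      LinearMap.lTensor B pN x = σ' ((1 : B) ⊗ₜ p (e i)) := fun i =>
    LinearMap.lTensor_surjective B hpN _
  choose x hx using hxs
  -- relations die after applying `lTensor B pN`
  have hwr : ∀ t : Fin m, LinearMap.lTensor B pN (∑ i, r t i • x i) = 0 := by
    intro t
    have hrt : r t ∈ LinearMap.ker p := by
      rw [← hr]; exact Submodule.subset_span ⟨t, rfl⟩
    have hsum : ∑ i, r t i • e i = r t := by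
      conv_rhs => rw [← e.sum_repr (r t)]
      simp [he, Pi.basisFun_repr]
    calc LinearMap.lTensor B pN (∑ i, r t i • x i)
        = ∑ i, r t i • σ' ((1 : B) ⊗ₜ p (e i)) := by
          rw [map_sum]; exact Finset.sum_congr rfl fun i _ => by rw [map_smul, hx]
      _ = σ' ((1 : B) ⊗ₜ p (∑ i, r t i • e i)) := by
          simp only [map_sum, map_smul, TensorProduct.tmul_sum, TensorProduct.tmul_smul]
      _ = 0 := by rw [hsum, LinearMap.mem_ker.mp hrt]; simp [hσ']
  -- exactness at the `B` level
  have hexact := lTensor_exact (f := (LinearMap.ker pN).subtype) B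
    (LinearMap.exact_subtype_ker_map pN) hpN
  have hys : ∀ t : Fin m, ∃ y : B ⊗[B'] (LinearMap.ker pN),
      LinearMap.lTensor B (LinearMap.ker pN).subtype y = ∑ i, r t i • x i := fun t =>
    (hexact _).mp (hwr t)
  choose y hy using hys
  -- write the `x i` and `y t` as finite sums of pure tensors
  choose S hS using fun i => TensorProduct.exists_finset (x i)
  choose T hT using fun t => TensorProduct.exists_finset (y t)
  -- the finite-type subalgebra
  set s : Set B := (⋃ i, Prod.fst '' (S i : Set (B × (Fin k → B')))) ∪
    (⋃ t, Prod.fst '' (T t : Set (B × (LinearMap.ker pN)))) with hs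
  have hsfin : s.Finite := by
    apply Set.Finite.union <;>
      exact Set.finite_iUnion fun i => Set.Finite.image _ (Finset.finite_toSet _)
  refine ⟨Algebra.adjoin B' s, Subalgebra.fg_def.mpr ⟨s, hsfin, rfl⟩, ?_⟩
  set A : Subalgebra B' B := Algebra.adjoin B' s with hA
  have hmemS : ∀ i, ∀ z ∈ S i, z.1 ∈ A := fun i z hz =>
    Algebra.subset_adjoin (Set.mem_union_left _ (Set.mem_iUnion.mpr ⟨i, ⟨z, hz, rfl⟩⟩))
  have hmemT : ∀ t, ∀ z ∈ T t, z.1 ∈ A := fun t z hz =>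
    Algebra.subset_adjoin (Set.mem_union_right _ (Set.mem_iUnion.mpr ⟨t, ⟨z, hz, rfl⟩⟩))
  -- lifts of `x i` and `y t` to the `A` level
  set ξ : Fin n → A ⊗[B'] (Fin k → B') := fun i =>
    ∑ z ∈ (S i).attach, (⟨z.1.1, hmemS i z.1 z.2⟩ : A) ⊗ₜ z.1.2 with hξdef
  set η : Fin m → A ⊗[B'] (LinearMap.ker pN) := fun t =>
    ∑ z ∈ (T t).attach, (⟨z.1.1, hmemT t z.1 z.2⟩ : A) ⊗ₜ z.1.2 with hηdef
  have hξ : ∀ i, LinearMap.rTensor (Fin k → B') A.val.toLinearMap (ξ i) = x i := by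
    intro i
    rw [hξdef, map_sum, hS i, ← Finset.sum_attach (S i) (fun z => z.1 ⊗ₜ[B'] z.2)]
    rfl
  have hη : ∀ t, LinearMap.rTensor (LinearMap.ker pN) A.val.toLinearMap (η t) = y t := by
    intro t
    rw [hηdef, map_sum, hT t, ← Finset.sum_attach (T t) (fun z => z.1 ⊗ₜ[B'] z.2)]
    rfl
  -- key relation at the `A` level, via flatness of the free module `Fin k → B'`
  have hrel : ∀ t : Fin m,
      ∑ i, r t i • ξ i = LinearMap.lTensor A (LinearMap.ker pN).subtype (η t) := by
    intro t
    apply Module.Flat.rTensor_preserves_injective_linearMap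
      (M := Fin k → B') A.val.toLinearMap Subtype.val_injective
    rw [map_sum]
    have h1 : ∀ i, LinearMap.rTensor (Fin k → B') A.val.toLinearMap (r t i • ξ i)
        = r t i • x i := fun i => by rw [map_smul, hξ]
    rw [Finset.sum_congr rfl fun i _ => h1 i]
    have h2 := LinearMap.congr_fun
      (LinearMap.rTensor_comp_lTensor _ A.val.toLinearMap
        (LinearMap.ker pN).subtype) (η t)
    have h3 := LinearMap.congr_fun
      (LinearMap.lTensor_comp_rTensor _ A.val.toLinearMap
        (LinearMap.ker pN).subtype) (η t)
    rw [LinearMap.comp_apply] at h2 h3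
    rw [h2, ← h3, hη, hy]
  -- the linear map on the free module
  set φ : (Fin n → B') →ₗ[B'] A ⊗[B'] N' :=
    e.constr B' (fun i => LinearMap.lTensor A pN (ξ i)) with hφdef
  have hφe : ∀ i, φ (e i) = LinearMap.lTensor A pN (ξ i) := fun i => e.constr_basis B' _ i
  have hker : LinearMap.ker p ≤ LinearMap.ker φ := by
    rw [← hr, Submodule.span_le]
    rintro _ ⟨t, rfl⟩
    have hsum : ∑ i, r t i • e i = r t := by
      conv_rhs => rw [← e.sum_repr (r t)]
      simp [he, Pi.basisFun_repr]
    have hφsum : φ (∑ i, r t i • e i) = LinearMap.lTensor A pN (∑ i, r t i • ξ i) := by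
      rw [map_sum, map_sum]
      exact Finset.sum_congr rfl fun i _ => by rw [map_smul, hφe, map_smul]
    have hzero : pN ∘ₗ (LinearMap.ker pN).subtype = 0 := by
      ext z; exact z.2
    rw [SetLike.mem_coe, LinearMap.mem_ker, ← hsum, hφsum, hrel t, ← LinearMap.comp_apply,
      ← LinearMap.lTensor_comp, hzero, LinearMap.lTensor_zero, LinearMap.zero_apply]
  -- descend to `Q'`
  set τ : Q' →ₗ[B'] A ⊗[B'] N' :=
    (Submodule.liftQ (LinearMap.ker p) φ hker) ∘ₗ
      ((p.quotKerEquivOfSurjective hp).symm : Q' →ₗ[B'] ((Fin n → B') ⧸ LinearMap.ker p))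
    with hτdef
  have hτ : ∀ v : Fin n → B', τ (p v) = φ v := by
    intro v
    have h1 : (p.quotKerEquivOfSurjective hp).symm (p v) = Submodule.Quotient.mk v := by
      rw [LinearEquiv.symm_apply_eq]
      simp [LinearMap.quotKerEquivOfSurjective, LinearMap.quotKerEquivRange_apply_mk]
    simp only [hτdef, LinearMap.comp_apply, LinearEquiv.coe_coe, h1, Submodule.liftQ_apply]
  -- the base-changed map
  refine ⟨τ.liftBaseChange A, ?_⟩
  -- commuting `rTensor A.val` with the `A`-action
  have hcomm : ∀ (a : A) (z : A ⊗[B'] N'),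
      LinearMap.rTensor N' A.val.toLinearMap (a • z)
        = (a : B) • LinearMap.rTensor N' A.val.toLinearMap z := by
    intro a z
    induction z using TensorProduct.induction_on with
    | zero => simp
    | tmul a' nn =>
        rw [TensorProduct.smul_tmul']
        simp only [LinearMap.rTensor_tmul]
        rw [TensorProduct.smul_tmul']
        rfl
    | add u v hu hv => rw [smul_add, map_add, hu, hv, map_add, smul_add]
  -- the key pointwise computation
  have key : ∀ (a : A) (v : Fin n → B'),
      σ (LinearMap.rTensor Q' A.val.toLinearMap (a ⊗ₜ p v)) =
        LinearMap.rTensor N' A.val.toLinearMap ((τ.liftBaseChange A) (a ⊗ₜ p v)) := by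
    intro a v
    have hL : ∀ w, σ (LinearMap.rTensor Q' A.val.toLinearMap (a ⊗ₜ p w))
        = (σ' ∘ₗ LinearMap.rTensor Q' A.val.toLinearMap ∘ₗ
            (TensorProduct.mk B' A Q' a) ∘ₗ p) w := fun w => rfl
    have hR : ∀ w, LinearMap.rTensor N' A.val.toLinearMap ((τ.liftBaseChange A) (a ⊗ₜ p w))
        = (LinearMap.rTensor N' A.val.toLinearMap ∘ₗ
            ((τ.liftBaseChange A).restrictScalars B') ∘ₗ
            (TensorProduct.mk B' A Q' a) ∘ₗ p) w := fun w => rfl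
    rw [hL, hR]
    refine LinearMap.congr_fun (e.ext fun i => ?_) v
    simp only [LinearMap.comp_apply, TensorProduct.mk_apply, LinearMap.coe_restrictScalars]
    rw [LinearMap.liftBaseChange_tmul, hτ, hφe, hcomm]
    have h3 := LinearMap.congr_fun
      (LinearMap.lTensor_comp_rTensor _ A.val.toLinearMap pN) (ξ i)
    have h2 := LinearMap.congr_fun
      (LinearMap.rTensor_comp_lTensor _ A.val.toLinearMap pN) (ξ i)
    rw [LinearMap.comp_apply] at h2 h3
    rw [h2, ← h3, hξ, hx]
    have : LinearMap.rTensor Q' A.val.toLinearMap (a ⊗ₜ p (e i))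
        = (a : B) ⊗ₜ p (e i) := rfl
    rw [this]
    have h4 : ((a : B) ⊗ₜ p (e i) : B ⊗[B'] Q') = (a : B) • ((1 : B) ⊗ₜ p (e i)) := by
      rw [TensorProduct.smul_tmul', smul_eq_mul, mul_one]
    rw [h4]
    have h5 : σ' ((a : B) • ((1 : B) ⊗ₜ p (e i))) = (a : B) • σ' ((1 : B) ⊗ₜ p (e i)) :=
      σ.map_smul _ _
    rw [h5]
  -- conclude by induction on tensors
  intro q
  induction q using TensorProduct.induction_on with
  | zero => simp
  | tmul a q' =>
      obtain ⟨v, rfl⟩ := hp q'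
      exact key a v
  | add u v hu hv => simp only [map_add, hu, hv]
end

section
/- Let B be a commutative ℚ-algebra, F a B-module, and n a natural number. Set B_n = B[T]/(T^{n+1}) and C_n = B[ε_1,…,ε_n]/(ε_1^2,…,ε_n^2), and let α̃ : B_n → C_n be the B-algebra homomorphism determined by T ↦ ε_1 + ⋯ + ε_n. Then the induced map α : Aut_{B_n}(B_n ⊗_B F) → Aut_{C_n}(C_n ⊗_B F), sending a B_n-linear automorphism φ of B_n ⊗_B F to its base change C_n ⊗_{B_n} φ, is injective. -/
open scoped TensorProduct

open Finset
lemma key_pow {Cn : Type*} [CommRing Cn] {n : ℕ} (ε : Fin n → Cn)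
    (hε : ∀ i : Fin n, ε i ^ 2 = 0) (k : ℕ) :
    (∑ i : Fin n, ε i) ^ k =
      (k.factorial : Cn) *
        ∑ S ∈ powersetCard k (univ : Finset (Fin n)), ∏ i ∈ S, ε i := by
  classical
  induction k with
  | zero => simp
  | succ k ih =>
    rw [pow_succ, ih, mul_assoc]
    have h1 : (∑ S ∈ powersetCard k (univ : Finset (Fin n)), ∏ i ∈ S, ε i) * (∑ j, ε j)
        = ∑ S ∈ powersetCard k (univ : Finset (Fin n)), ∑ j ∈ Sᶜ, ∏ i ∈ insert j S, ε i := by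
      rw [sum_mul]
      refine sum_congr rfl fun S hS => ?_
      rw [mul_sum]
      rw [← sum_subset (subset_univ Sᶜ) (fun j _ hj => ?_)]
      · refine sum_congr rfl fun j hj => ?_
        have hjS : j ∉ S := by simpa using hj
        rw [prod_insert hjS, mul_comm]
      · have hjS : j ∈ S := by simpa using hj
        rw [← Finset.prod_erase_mul S ε hjS, mul_assoc, ← sq, hε, mul_zero]
    rw [h1]
    have h2 : ∑ S ∈ powersetCard k (univ : Finset (Fin n)), ∑ j ∈ Sᶜ, ∏ i ∈ insert j S, ε i
        = ∑ T ∈ powersetCard (k+1) (univ : Finset (Fin n)), ∑ j ∈ T, ∏ i ∈ T, ε i := by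
      rw [sum_sigma', sum_sigma']
      refine sum_nbij' (fun p => ⟨insert p.2 p.1, p.2⟩) (fun q => ⟨q.1.erase q.2, q.2⟩)
        ?_ ?_ ?_ ?_ ?_
      · rintro ⟨S, j⟩ hp
        simp only [mem_sigma, mem_powersetCard, mem_compl] at hp ⊢
        obtain ⟨⟨hS, hcard⟩, hj⟩ := hp
        exact ⟨⟨subset_univ _, by rw [card_insert_of_notMem hj, hcard]⟩, mem_insert_self _ _⟩
      · rintro ⟨T, j⟩ hq
        simp only [mem_sigma, mem_powersetCard, mem_compl] at hq ⊢
        obtain ⟨⟨hT, hcard⟩, hj⟩ := hq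
        exact ⟨⟨subset_univ _, by rw [card_erase_of_mem hj, hcard]; rfl⟩, notMem_erase _ _⟩
      · rintro ⟨S, j⟩ hp
        simp only [mem_sigma, mem_compl] at hp
        simp [erase_insert hp.2]
      · rintro ⟨T, j⟩ hq
        simp only [mem_sigma] at hq
        simp [insert_erase hq.2]
      · rintro ⟨S, j⟩ hp; rfl
    rw [h2]
    have h3 : ∀ T ∈ powersetCard (k+1) (univ : Finset (Fin n)),
        ∑ j ∈ T, ∏ i ∈ T, ε i = (k+1 : ℕ) • ∏ i ∈ T, ε i := by
      intro T hT
      rw [sum_const, (mem_powersetCard.mp hT).2]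
    rw [sum_congr rfl h3, ← smul_sum, Nat.factorial_succ, Nat.cast_mul, mul_assoc,
      nsmul_eq_mul]
    ring

/-- Let `B` be a commutative `ℚ`-algebra, `F` a `B`-module and `n ∈ ℕ`.
Let `Bn` be (a `B`-algebra presenting) `B[T]/(T^{n+1})`: it has a basis `1, t, …, t^n` over `B`
with `t^{n+1} = 0`.  Let `Cn` be `B[ε₁,…,ε_n]/(ε₁²,…,ε_n²)`: it has a basis over `B` indexed
by the subsets `S ⊆ {1,…,n}`, given by the squarefree monomials `∏_{i ∈ S} ε_i`, with
`ε_i² = 0`.  Let `α : Bn → Cn` be the `B`-algebra map with `α t = ε₁ + ⋯ + ε_n`.  Then the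
induced map on automorphism groups `Aut_{Bn}(Bn ⊗_B F) → Aut_{Cn}(Cn ⊗_B F)` is injective:
two `Bn`-linear automorphisms `φ, ψ` of `Bn ⊗_B F` with the same base change along `α`
(equivalently, with `(α ⊗ id) ∘ φ = (α ⊗ id) ∘ ψ`, which determines the base change on the
generators of `Cn ⊗_B F` over `Cn`) are equal. -/
theorem stmt_17 {B : Type*} [CommRing B] [Algebra ℚ B] {n : ℕ}
    {Bn : Type*} [CommRing Bn] [Algebra B Bn]
    {Cn : Type*} [CommRing Cn] [Algebra B Cn]
    (t : Bn) (bB : Module.Basis (Fin (n + 1)) B Bn)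
    (hbB : ∀ i : Fin (n + 1), bB i = t ^ (i : ℕ))
    (htn : t ^ (n + 1) = 0)
    (ε : Fin n → Cn) (hε : ∀ i : Fin n, ε i ^ 2 = 0)
    (bC : Module.Basis (Finset (Fin n)) B Cn)
    (hbC : ∀ S : Finset (Fin n), bC S = ∏ i ∈ S, ε i)
    (α : Bn →ₐ[B] Cn) (hα : α t = ∑ i : Fin n, ε i)
    {F : Type*} [AddCommGroup F] [Module B F]
    (φ ψ : (Bn ⊗[B] F) ≃ₗ[Bn] (Bn ⊗[B] F))
    (hφψ : ∀ x : Bn ⊗[B] F,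
      TensorProduct.map α.toLinearMap (LinearMap.id : F →ₗ[B] F) (φ x) =
        TensorProduct.map α.toLinearMap (LinearMap.id : F →ₗ[B] F) (ψ x)) :
    φ = ψ := by
  classical
  -- a left inverse of α as a B-linear map
  set β : Cn →ₗ[B] Bn :=
    bC.constr B (fun S =>
      (algebraMap ℚ B (((S.card.factorial * n.choose S.card : ℕ) : ℚ)⁻¹)) • t ^ S.card) with hβ
  have hβα : β.comp α.toLinearMap = LinearMap.id := by
    refine bB.ext fun i => ?_
    have hik : (i : ℕ) ≤ n := Nat.lt_succ_iff.mp i.isLt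
    have hαt : α (t ^ (i : ℕ)) = (Nat.factorial i : Cn) *
        ∑ S ∈ powersetCard (i : ℕ) (univ : Finset (Fin n)), ∏ j ∈ S, ε j := by
      rw [map_pow, hα, key_pow ε hε]
    simp only [LinearMap.comp_apply, AlgHom.toLinearMap_apply, LinearMap.id_apply, hbB]
    rw [hαt]
    have : ((Nat.factorial i : Cn)) * ∑ S ∈ powersetCard (i : ℕ) (univ : Finset (Fin n)),
        ∏ j ∈ S, ε j = (Nat.factorial i : ℕ) •
        ∑ S ∈ powersetCard (i : ℕ) (univ : Finset (Fin n)), ∏ j ∈ S, ε j := by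
      rw [nsmul_eq_mul]
    rw [this, map_nsmul, map_sum]
    have hSval : ∀ S ∈ powersetCard (i : ℕ) (univ : Finset (Fin n)),
        β (∏ j ∈ S, ε j) =
          (algebraMap ℚ B ((((i : ℕ).factorial * n.choose (i : ℕ) : ℕ) : ℚ)⁻¹)) • t ^ (i : ℕ) := by
      intro S hS
      have hcard : S.card = (i : ℕ) := (mem_powersetCard.mp hS).2
      rw [← hbC, hβ, Module.Basis.constr_basis, hcard]
    rw [sum_congr rfl hSval, sum_const, card_powersetCard, card_univ, Fintype.card_fin,
      smul_smul]
    have hm : ((((i : ℕ).factorial * n.choose (i : ℕ) : ℕ) : ℚ)) ≠ 0 := by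
      have := Nat.choose_pos hik
      positivity
    rw [← Nat.cast_smul_eq_nsmul B, smul_smul, ← map_natCast (algebraMap ℚ B), ← map_mul,
      mul_inv_cancel₀ hm, map_one, one_smul]
  -- injectivity of the induced map on tensor products
  have hinj : Function.Injective
      (TensorProduct.map α.toLinearMap (LinearMap.id : F →ₗ[B] F)) := by
    have hcomp : (TensorProduct.map β (LinearMap.id : F →ₗ[B] F)).comp
        (TensorProduct.map α.toLinearMap (LinearMap.id : F →ₗ[B] F)) = LinearMap.id := by
      rw [← TensorProduct.map_comp, hβα, LinearMap.comp_id, TensorProduct.map_id]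
    intro x y hxy
    have h2 := congrArg (TensorProduct.map β (LinearMap.id : F →ₗ[B] F)) hxy
    rwa [← LinearMap.comp_apply, ← LinearMap.comp_apply, hcomp, LinearMap.id_apply,
      LinearMap.id_apply] at h2
  exact LinearEquiv.ext fun x => hinj (hφψ x)
end
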